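/- Let K : [0,1] × [0,1] → ℝ be a continuous transition density with K(x,y) ≥ δ > 0 for all x,y and ∫₀¹ K(x,y) dy = 1 for all x. Then there exists a continuous probability density u on [0,1] (u ≥ 0, ∫₀¹ u = 1) such that ∫₀¹ u(x) K(x,y) dx = u(y) for all y, and the n-step densities K_n(x,·) converge uniformly to u, independently of the starting point x. -/

import Mathlib

open MeasureTheory Set

/-- Iterated kernels: `iterK K n` is the `(n+1)`-st iterated kernel `K_{n+1}`,
so `iterK K 0 = K₁ = K` and `K_{n+2}(x,y) = ∫₀¹ K_{n+1}(x,z) K(z,y) dz`. -/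
noncomputable def iterK (K : ℝ → ℝ → ℝ) : ℕ → ℝ → ℝ → ℝ
  | 0 => K
  | n + 1 => fun x y => ∫ z in (0:ℝ)..1, iterK K n x z * K z y


lemma iterK_cont {K : ℝ → ℝ → ℝ} (hK : Continuous fun p : ℝ × ℝ => K p.1 p.2) :
    ∀ n, Continuous fun p : ℝ × ℝ => iterK K n p.1 p.2 := by
  intro n
  induction n with
  | zero => exact hK
  | succ n ih =>
    show Continuous fun p : ℝ × ℝ => ∫ z in (0:ℝ)..1, iterK K n p.1 z * K z p.2
    apply intervalIntegral.continuous_parametric_intervalIntegral_of_continuous'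
    exact (ih.comp (continuous_fst.fst.prodMk continuous_snd)).mul
      (hK.comp (continuous_snd.prodMk continuous_fst.snd))

lemma swap01 {f : ℝ → ℝ → ℝ} (hf : Continuous fun p : ℝ × ℝ => f p.1 p.2) :
    ∫ x in (0:ℝ)..1, ∫ y in (0:ℝ)..1, f x y = ∫ y in (0:ℝ)..1, ∫ x in (0:ℝ)..1, f x y := by
  have h01 : (0:ℝ) ≤ 1 := zero_le_one
  rw [intervalIntegral.integral_of_le h01, intervalIntegral.integral_of_le h01]
  simp_rw [intervalIntegral.integral_of_le h01]
  apply MeasureTheory.integral_integral_swap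
  have : IntegrableOn (fun p : ℝ × ℝ => f p.1 p.2) (Ioc (0:ℝ) 1 ×ˢ Ioc (0:ℝ) 1) volume := by
    apply IntegrableOn.mono_set (t := Icc (0:ℝ) 1 ×ˢ Icc (0:ℝ) 1)
    · exact (hf.continuousOn).integrableOn_compact (isCompact_Icc.prod isCompact_Icc)
    · exact Set.prod_mono Ioc_subset_Icc_self Ioc_subset_Icc_self
  rw [MeasureTheory.Measure.prod_restrict]
  rw [IntegrableOn, MeasureTheory.Measure.volume_eq_prod] at this
  exact this

lemma uIcc01 : Set.uIcc (0:ℝ) 1 = Set.Icc 0 1 := Set.uIcc_of_le zero_le_one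

lemma iterK_cont_l {K : ℝ → ℝ → ℝ} (hK : Continuous fun p : ℝ × ℝ => K p.1 p.2)
    (n : ℕ) (y : ℝ) : Continuous fun z => iterK K n z y :=
  (iterK_cont hK n).comp (continuous_id.prodMk continuous_const)

lemma iterK_cont_r {K : ℝ → ℝ → ℝ} (hK : Continuous fun p : ℝ × ℝ => K p.1 p.2)
    (n : ℕ) (x : ℝ) : Continuous fun z => iterK K n x z :=
  (iterK_cont hK n).comp (continuous_const.prodMk continuous_id)

lemma iterK_row {K : ℝ → ℝ → ℝ} (hK : Continuous fun p : ℝ × ℝ => K p.1 p.2)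
    (hrow : ∀ x ∈ Set.Icc (0:ℝ) 1, ∫ y in (0:ℝ)..1, K x y = 1) :
    ∀ n, ∀ x ∈ Set.Icc (0:ℝ) 1, ∫ y in (0:ℝ)..1, iterK K n x y = 1 := by
  intro n
  induction n with
  | zero => exact hrow
  | succ n ih =>
    intro x hx
    show ∫ y in (0:ℝ)..1, ∫ z in (0:ℝ)..1, iterK K n x z * K z y = 1
    rw [swap01 (f := fun y z => iterK K n x z * K z y)
      (((iterK_cont hK n).comp (continuous_const.prodMk continuous_snd)).mul
        (hK.comp (continuous_snd.prodMk continuous_fst)))]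
    have : ∀ z ∈ Set.uIcc (0:ℝ) 1,
        (∫ y in (0:ℝ)..1, iterK K n x z * K z y) = iterK K n x z := by
      intro z hz
      rw [intervalIntegral.integral_const_mul, hrow z (uIcc01 ▸ hz), mul_one]
    rw [intervalIntegral.integral_congr this]
    exact ih x hx

lemma iterK_bounds {K : ℝ → ℝ → ℝ} {δ C : ℝ} (hK : Continuous fun p : ℝ × ℝ => K p.1 p.2)
    (hδ : 0 < δ)
    (hpos : ∀ x ∈ Set.Icc (0:ℝ) 1, ∀ y ∈ Set.Icc (0:ℝ) 1, δ ≤ K x y)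
    (hrow : ∀ x ∈ Set.Icc (0:ℝ) 1, ∫ y in (0:ℝ)..1, K x y = 1)
    (hC : ∀ x ∈ Set.Icc (0:ℝ) 1, ∀ y ∈ Set.Icc (0:ℝ) 1, K x y ≤ C) :
    ∀ n, ∀ x ∈ Set.Icc (0:ℝ) 1, ∀ y ∈ Set.Icc (0:ℝ) 1,
      δ ≤ iterK K n x y ∧ iterK K n x y ≤ C := by
  intro n
  induction n with
  | zero => exact fun x hx y hy => ⟨hpos x hx y hy, hC x hx y hy⟩
  | succ n ih =>
    intro x hx y hy
    have hrown := iterK_row hK hrow n x hx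
    have hint : IntervalIntegrable (fun z => iterK K n x z * K z y) volume 0 1 :=
      ((iterK_cont_r hK n x).mul (hK.comp (continuous_id.prodMk continuous_const))).intervalIntegrable 0 1
    have hnneg : ∀ z ∈ Set.Icc (0:ℝ) 1, (0:ℝ) ≤ iterK K n x z :=
      fun z hz => le_trans hδ.le (ih x hx z hz).1
    constructor
    · show δ ≤ ∫ z in (0:ℝ)..1, iterK K n x z * K z y
      have h1 : ∫ z in (0:ℝ)..1, iterK K n x z * δ = δ := by
        rw [intervalIntegral.integral_mul_const, hrown, one_mul]
      rw [← h1]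
      apply intervalIntegral.integral_mono_on zero_le_one
        (((iterK_cont_r hK n x).mul continuous_const).intervalIntegrable 0 1) hint
      intro z hz
      exact mul_le_mul_of_nonneg_left (hpos z hz y hy) (hnneg z hz)
    · show (∫ z in (0:ℝ)..1, iterK K n x z * K z y) ≤ C
      have h1 : ∫ z in (0:ℝ)..1, iterK K n x z * C = C := by
        rw [intervalIntegral.integral_mul_const, hrown, one_mul]
      rw [← h1]
      apply intervalIntegral.integral_mono_on zero_le_one hint
        (((iterK_cont_r hK n x).mul continuous_const).intervalIntegrable 0 1)
      intro z hz
      exact mul_le_mul_of_nonneg_left (hC z hz y hy) (hnneg z hz)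

lemma iterK_leftcomp {K : ℝ → ℝ → ℝ} (hK : Continuous fun p : ℝ × ℝ => K p.1 p.2) :
    ∀ n (x y : ℝ), iterK K (n+1) x y = ∫ z in (0:ℝ)..1, K x z * iterK K n z y := by
  intro n
  induction n with
  | zero => intro x y; rfl
  | succ n ih =>
    intro x y
    show (∫ z in (0:ℝ)..1, iterK K (n+1) x z * K z y)
        = ∫ z in (0:ℝ)..1, K x z * iterK K (n+1) z y
    have h1 : ∀ z ∈ Set.uIcc (0:ℝ) 1, iterK K (n+1) x z * K z y
        = ∫ w in (0:ℝ)..1, K x w * iterK K n w z * K z y := by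
      intro z _
      rw [ih x z, ← intervalIntegral.integral_mul_const]
    rw [intervalIntegral.integral_congr h1]
    have h2 : ∀ w ∈ Set.uIcc (0:ℝ) 1, (∫ z in (0:ℝ)..1, K x w * iterK K n w z * K z y)
        = K x w * iterK K (n+1) w y := by
      intro w _
      show (∫ z in (0:ℝ)..1, K x w * iterK K n w z * K z y)
          = K x w * ∫ z in (0:ℝ)..1, iterK K n w z * K z y
      rw [← intervalIntegral.integral_const_mul]
      congr 1; ext z; ring
    rw [← intervalIntegral.integral_congr h2]
    apply swap01 (f := fun z w => K x w * iterK K n w z * K z y)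
    apply Continuous.mul
    · exact ((hK.comp (continuous_const.prodMk continuous_snd)).mul
        ((iterK_cont hK n).comp (continuous_snd.prodMk continuous_fst)))
    · exact hK.comp (continuous_fst.prodMk continuous_const)

lemma iterK_contract {K : ℝ → ℝ → ℝ} {δ C : ℝ} (hK : Continuous fun p : ℝ × ℝ => K p.1 p.2)
    (hδ : 0 < δ) (hδ1 : δ ≤ 1)
    (hpos : ∀ x ∈ Set.Icc (0:ℝ) 1, ∀ y ∈ Set.Icc (0:ℝ) 1, δ ≤ K x y)
    (hrow : ∀ x ∈ Set.Icc (0:ℝ) 1, ∫ y in (0:ℝ)..1, K x y = 1)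
    (hC : ∀ x ∈ Set.Icc (0:ℝ) 1, ∀ y ∈ Set.Icc (0:ℝ) 1, K x y ≤ C) :
    ∀ n, ∀ x ∈ Set.Icc (0:ℝ) 1, ∀ x' ∈ Set.Icc (0:ℝ) 1, ∀ y ∈ Set.Icc (0:ℝ) 1,
      iterK K n x y - iterK K n x' y ≤ (C - δ) * (1 - δ)^n := by
  have hδC : δ ≤ C := le_trans (hpos 0 (by norm_num) 0 (by norm_num)) (hC 0 (by norm_num) 0 (by norm_num))
  intro n
  induction n with
  | zero =>
    intro x hx x' hx' y hy
    simpa [iterK] using sub_le_sub (hC x hx y hy) (hpos x' hx' y hy)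
  | succ n ih =>
    intro x hx x' hx' y hy
    set Cn : ℝ := (C - δ) * (1 - δ)^n with hCndef
    have hCn0 : 0 ≤ Cn := mul_nonneg (by linarith) (pow_nonneg (by linarith) n)
    have hcont : Continuous fun z => iterK K n z y := iterK_cont_l hK n y
    obtain ⟨z₀, hz₀, hmin⟩ := isCompact_Icc.exists_isMinOn (Set.nonempty_Icc.2 zero_le_one)
      hcont.continuousOn
    set c : ℝ := iterK K n z₀ y with hcdef
    have hminle : ∀ z ∈ Set.Icc (0:ℝ) 1, c ≤ iterK K n z y := fun z hz => hmin hz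
    have cKx : Continuous fun z => K x z := hK.comp (continuous_const.prodMk continuous_id)
    have cKx' : Continuous fun z => K x' z := hK.comp (continuous_const.prodMk continuous_id)
    have cg : Continuous fun z => K x z - K x' z := cKx.sub cKx'
    have e0 : iterK K (n+1) x y - iterK K (n+1) x' y
        = ∫ z in (0:ℝ)..1, (K x z - K x' z) * iterK K n z y := by
      rw [iterK_leftcomp hK, iterK_leftcomp hK,
        ← intervalIntegral.integral_sub (f := fun z => K x z * iterK K n z y)
          (g := fun z => K x' z * iterK K n z y) ((cKx.mul hcont).intervalIntegrable 0 1)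
          ((cKx'.mul hcont).intervalIntegrable 0 1)]
      congr 1; ext z; ring
    have e2 : (∫ z in (0:ℝ)..1, (K x z - K x' z) * c) = 0 := by
      rw [intervalIntegral.integral_mul_const,
        intervalIntegral.integral_sub (cKx.intervalIntegrable 0 1) (cKx'.intervalIntegrable 0 1),
        hrow x hx, hrow x' hx', sub_self, zero_mul]
    have e1 : iterK K (n+1) x y - iterK K (n+1) x' y
        = ∫ z in (0:ℝ)..1, (K x z - K x' z) * (iterK K n z y - c) := by
      rw [e0]
      have : (∫ z in (0:ℝ)..1, (K x z - K x' z) * (iterK K n z y - c))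
          = (∫ z in (0:ℝ)..1, (K x z - K x' z) * iterK K n z y)
            - ∫ z in (0:ℝ)..1, (K x z - K x' z) * c := by
        rw [← intervalIntegral.integral_sub (f := fun z => (K x z - K x' z) * iterK K n z y)
          (g := fun z => (K x z - K x' z) * c) ((cg.mul hcont).intervalIntegrable 0 1)
          ((cg.mul continuous_const).intervalIntegrable 0 1)]
        congr 1; ext z; ring
      rw [this, e2, sub_zero]
    rw [e1]
    have step1 : (∫ z in (0:ℝ)..1, (K x z - K x' z) * (iterK K n z y - c))
        ≤ ∫ z in (0:ℝ)..1, max (K x z - K x' z) 0 * Cn := by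
      apply intervalIntegral.integral_mono_on zero_le_one
        ((cg.mul (hcont.sub continuous_const)).intervalIntegrable 0 1)
        (((cg.max continuous_const).mul continuous_const).intervalIntegrable 0 1)
      intro z hz
      rcases le_or_gt (K x z - K x' z) 0 with h | h
      · have : (K x z - K x' z) * (iterK K n z y - c) ≤ 0 :=
          mul_nonpos_of_nonpos_of_nonneg h (sub_nonneg.2 (hminle z hz))
        exact le_trans this (mul_nonneg (le_max_right _ _) hCn0)
      · show (K x z - K x' z) * (iterK K n z y - c) ≤ max (K x z - K x' z) 0 * Cn
        rw [max_eq_left h.le]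
        exact mul_le_mul_of_nonneg_left (by linarith [ih z hz z₀ hz₀ y hy]) h.le
    have step2 : (∫ z in (0:ℝ)..1, max (K x z - K x' z) 0 * Cn) ≤ (1 - δ) * Cn := by
      rw [intervalIntegral.integral_mul_const]
      apply mul_le_mul_of_nonneg_right _ hCn0
      have hsub : (∫ z in (0:ℝ)..1, (K x z - δ)) = 1 - δ := by
        rw [intervalIntegral.integral_sub (cKx.intervalIntegrable 0 1)
          (intervalIntegrable_const), hrow x hx]
        simp
      rw [← hsub]
      apply intervalIntegral.integral_mono_on zero_le_one
        ((cg.max continuous_const).intervalIntegrable 0 1)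
        ((cKx.sub continuous_const).intervalIntegrable 0 1)
      intro z hz
      show max (K x z - K x' z) 0 ≤ K x z - δ
      exact max_le (by linarith [hpos x' hx' z hz]) (by linarith [hpos x hx z hz])
    calc _ ≤ (1 - δ) * Cn := le_trans step1 step2
      _ = (C - δ) * (1 - δ)^(n+1) := by rw [hCndef, pow_succ]; ring

lemma iterK_osc {K : ℝ → ℝ → ℝ} {δ C : ℝ} (hK : Continuous fun p : ℝ × ℝ => K p.1 p.2)
    (hδ : 0 < δ) (hδ1 : δ ≤ 1)
    (hpos : ∀ x ∈ Set.Icc (0:ℝ) 1, ∀ y ∈ Set.Icc (0:ℝ) 1, δ ≤ K x y)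
    (hrow : ∀ x ∈ Set.Icc (0:ℝ) 1, ∫ y in (0:ℝ)..1, K x y = 1)
    (hC : ∀ x ∈ Set.Icc (0:ℝ) 1, ∀ y ∈ Set.Icc (0:ℝ) 1, K x y ≤ C) :
    ∀ n, ∀ x ∈ Set.Icc (0:ℝ) 1, ∀ x' ∈ Set.Icc (0:ℝ) 1, ∀ y ∈ Set.Icc (0:ℝ) 1,
      |iterK K n x y - iterK K n x' y| ≤ (C - δ) * (1 - δ)^n := fun n x hx x' hx' y hy =>
  abs_sub_le_iff.2 ⟨iterK_contract hK hδ hδ1 hpos hrow hC n x hx x' hx' y hy,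
    iterK_contract hK hδ hδ1 hpos hrow hC n x' hx' x hx y hy⟩

lemma iterK_step {K : ℝ → ℝ → ℝ} {δ C : ℝ} (hK : Continuous fun p : ℝ × ℝ => K p.1 p.2)
    (hδ : 0 < δ) (hδ1 : δ ≤ 1)
    (hpos : ∀ x ∈ Set.Icc (0:ℝ) 1, ∀ y ∈ Set.Icc (0:ℝ) 1, δ ≤ K x y)
    (hrow : ∀ x ∈ Set.Icc (0:ℝ) 1, ∫ y in (0:ℝ)..1, K x y = 1)
    (hC : ∀ x ∈ Set.Icc (0:ℝ) 1, ∀ y ∈ Set.Icc (0:ℝ) 1, K x y ≤ C) :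
    ∀ n, ∀ x ∈ Set.Icc (0:ℝ) 1, ∀ y ∈ Set.Icc (0:ℝ) 1,
      |iterK K (n+1) x y - iterK K n x y| ≤ (C - δ) * (1 - δ)^n := by
  intro n x hx y hy
  set Cn : ℝ := (C - δ) * (1 - δ)^n with hCndef
  have hcont : Continuous fun z => iterK K n z y := iterK_cont_l hK n y
  have cKx : Continuous fun z => K x z := hK.comp (continuous_const.prodMk continuous_id)
  have e0 : iterK K (n+1) x y - iterK K n x y
      = ∫ z in (0:ℝ)..1, K x z * (iterK K n z y - iterK K n x y) := by
    have : (∫ z in (0:ℝ)..1, K x z * (iterK K n z y - iterK K n x y))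
        = (∫ z in (0:ℝ)..1, K x z * iterK K n z y)
          - ∫ z in (0:ℝ)..1, K x z * iterK K n x y := by
      rw [← intervalIntegral.integral_sub (f := fun z => K x z * iterK K n z y)
        (g := fun z => K x z * iterK K n x y) ((cKx.mul hcont).intervalIntegrable 0 1)
        ((cKx.mul continuous_const).intervalIntegrable 0 1)]
      congr 1; ext z; ring
    rw [this, intervalIntegral.integral_mul_const, hrow x hx, one_mul,
      ← iterK_leftcomp hK]
  rw [e0]
  have hintm : IntervalIntegrable (fun z => K x z * (iterK K n z y - iterK K n x y)) volume 0 1 :=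
    (cKx.mul (hcont.sub continuous_const)).intervalIntegrable 0 1
  have hKC : ∀ z ∈ Set.Icc (0:ℝ) 1, (0:ℝ) ≤ K x z := fun z hz => le_trans hδ.le (hpos x hx z hz)
  have hconst : ∀ c : ℝ, (∫ z in (0:ℝ)..1, K x z * c) = c := by
    intro c; rw [intervalIntegral.integral_mul_const, hrow x hx, one_mul]
  rw [abs_le]
  constructor
  · rw [← hconst (-Cn)]
    apply intervalIntegral.integral_mono_on zero_le_one
      ((cKx.mul continuous_const).intervalIntegrable 0 1) hintm
    intro z hz
    have := abs_le.1 (iterK_osc hK hδ hδ1 hpos hrow hC n z hz x hx y hy)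
    exact mul_le_mul_of_nonneg_left (by linarith [this.1]) (hKC z hz)
  · rw [← hconst Cn]
    apply intervalIntegral.integral_mono_on zero_le_one hintm
      ((cKx.mul continuous_const).intervalIntegrable 0 1)
    intro z hz
    have := abs_le.1 (iterK_osc hK hδ hδ1 hpos hrow hC n z hz x hx y hy)
    exact mul_le_mul_of_nonneg_left (by linarith [this.2]) (hKC z hz)

lemma iterK_tele {K : ℝ → ℝ → ℝ} {δ C : ℝ} (hK : Continuous fun p : ℝ × ℝ => K p.1 p.2)
    (hδ : 0 < δ) (hδ1 : δ ≤ 1)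
    (hpos : ∀ x ∈ Set.Icc (0:ℝ) 1, ∀ y ∈ Set.Icc (0:ℝ) 1, δ ≤ K x y)
    (hrow : ∀ x ∈ Set.Icc (0:ℝ) 1, ∫ y in (0:ℝ)..1, K x y = 1)
    (hC : ∀ x ∈ Set.Icc (0:ℝ) 1, ∀ y ∈ Set.Icc (0:ℝ) 1, K x y ≤ C) :
    ∀ n m, ∀ x ∈ Set.Icc (0:ℝ) 1, ∀ y ∈ Set.Icc (0:ℝ) 1,
      |iterK K (n+m) x y - iterK K n x y|
        ≤ ((C - δ)/δ) * ((1 - δ)^n - (1 - δ)^(n+m)) := by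
  intro n m
  induction m with
  | zero => intro x hx y hy; simp
  | succ m ih =>
    intro x hx y hy
    have h1 := iterK_step hK hδ hδ1 hpos hrow hC (n+m) x hx y hy
    have h2 := ih x hx y hy
    have h3 : |iterK K (n+(m+1)) x y - iterK K n x y|
        ≤ |iterK K (n+m+1) x y - iterK K (n+m) x y| + |iterK K (n+m) x y - iterK K n x y| := by
      rw [show n+(m+1) = n+m+1 by ring]
      exact abs_sub_le _ _ _
    have key : (C - δ) * (1 - δ)^(n+m) + ((C - δ)/δ) * ((1 - δ)^n - (1 - δ)^(n+m))
        = ((C - δ)/δ) * ((1 - δ)^n - (1 - δ)^(n+(m+1))) := by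
      rw [show n+(m+1) = (n+m)+1 by ring, pow_succ]
      field_simp
      ring
    linarith

theorem hostinsky_invariant_density (K : ℝ → ℝ → ℝ) (δ : ℝ)
    (hK : Continuous fun p : ℝ × ℝ => K p.1 p.2) (hδ : 0 < δ)
    (hpos : ∀ x ∈ Set.Icc (0:ℝ) 1, ∀ y ∈ Set.Icc (0:ℝ) 1, δ ≤ K x y)
    (hrow : ∀ x ∈ Set.Icc (0:ℝ) 1, ∫ y in (0:ℝ)..1, K x y = 1) :
    ∃ u : ℝ → ℝ, ContinuousOn u (Set.Icc 0 1) ∧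
      (∀ x ∈ Set.Icc (0:ℝ) 1, 0 ≤ u x) ∧ (∫ x in (0:ℝ)..1, u x) = 1 ∧
      (∀ y ∈ Set.Icc (0:ℝ) 1, ∫ x in (0:ℝ)..1, u x * K x y = u y) ∧
      ∀ ε > (0:ℝ), ∃ N : ℕ, ∀ n ≥ N, ∀ x ∈ Set.Icc (0:ℝ) 1, ∀ y ∈ Set.Icc (0:ℝ) 1,
        |iterK K n x y - u y| ≤ ε := by
  classical
  have h0 : (0:ℝ) ∈ Set.Icc (0:ℝ) 1 := ⟨le_rfl, zero_le_one⟩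
  -- upper bound C
  obtain ⟨C, hCb⟩ := (isCompact_Icc.prod isCompact_Icc).exists_bound_of_continuousOn
    hK.continuousOn
  have hC : ∀ x ∈ Set.Icc (0:ℝ) 1, ∀ y ∈ Set.Icc (0:ℝ) 1, K x y ≤ C := fun x hx y hy =>
    le_trans (le_abs_self _) (hCb (x, y) ⟨hx, hy⟩)
  have hδC : δ ≤ C := le_trans (hpos 0 h0 0 h0) (hC 0 h0 0 h0)
  -- δ ≤ 1
  have hδ1 : δ ≤ 1 := by
    have h1 : (∫ y in (0:ℝ)..1, (δ:ℝ)) ≤ ∫ y in (0:ℝ)..1, K 0 y := by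
      apply intervalIntegral.integral_mono_on zero_le_one intervalIntegrable_const
        ((hK.comp (continuous_const.prodMk continuous_id)).intervalIntegrable 0 1)
      exact fun y hy => hpos 0 h0 y hy
    rw [hrow 0 h0] at h1
    simpa using h1
  set S : ℕ → ℝ := fun n => ((C - δ)/δ) * (1 - δ)^n with hSdef
  have hd0 : (0:ℝ) ≤ 1 - δ := by linarith
  have hd1 : (1:ℝ) - δ < 1 := by linarith
  have hS0 : ∀ n, 0 ≤ S n := fun n =>
    mul_nonneg (div_nonneg (by linarith) hδ.le) (pow_nonneg hd0 n)
  have hpow : Filter.Tendsto (fun n : ℕ => (1 - δ)^n) Filter.atTop (nhds 0) :=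
    tendsto_pow_atTop_nhds_zero_of_lt_one hd0 hd1
  have hTendS : Filter.Tendsto S Filter.atTop (nhds 0) := by
    simpa using hpow.const_mul ((C - δ)/δ)
  -- telescoping bound
  have htele : ∀ n m, ∀ x ∈ Set.Icc (0:ℝ) 1, ∀ y ∈ Set.Icc (0:ℝ) 1,
      |iterK K (n+m) x y - iterK K n x y| ≤ S n := by
    intro n m x hx y hy
    refine le_trans (iterK_tele hK hδ hδ1 hpos hrow hC n m x hx y hy) ?_
    apply mul_le_mul_of_nonneg_left _ (div_nonneg (by linarith) hδ.le)
    have := pow_nonneg hd0 (n+m)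
    linarith
  -- Cauchy and limit
  have hcauchy : ∀ y ∈ Set.Icc (0:ℝ) 1, CauchySeq (fun n => iterK K n 0 y) := by
    intro y hy
    apply cauchySeq_of_le_tendsto_0' S _ hTendS
    intro n m hnm
    obtain ⟨k, rfl⟩ := Nat.exists_eq_add_of_le hnm
    rw [Real.dist_eq, abs_sub_comm]
    exact htele n k 0 h0 y hy
  set u : ℝ → ℝ := fun y => Filter.limUnder Filter.atTop (fun n => iterK K n 0 y) with hudef
  have hu : ∀ y ∈ Set.Icc (0:ℝ) 1,
      Filter.Tendsto (fun n => iterK K n 0 y) Filter.atTop (nhds (u y)) := fun y hy =>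
    tendsto_nhds_limUnder (cauchySeq_tendsto_of_complete (hcauchy y hy))
  -- uniform error bound for the base point
  have hun : ∀ n, ∀ y ∈ Set.Icc (0:ℝ) 1, |iterK K n 0 y - u y| ≤ S n := by
    intro n y hy
    have hsub : Filter.Tendsto (fun m => iterK K (m+n) 0 y) Filter.atTop (nhds (u y)) :=
      (hu y hy).comp (Filter.tendsto_add_atTop_nat n)
    have habs : Filter.Tendsto (fun m => |iterK K (m+n) 0 y - iterK K n 0 y|) Filter.atTop
        (nhds (|u y - iterK K n 0 y|)) := ((hsub.sub tendsto_const_nhds).abs)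
    rw [abs_sub_comm]
    refine le_of_tendsto habs (Filter.Eventually.of_forall fun m => ?_)
    rw [show m + n = n + m from Nat.add_comm m n]
    exact htele n m 0 h0 y hy
  -- main uniform estimate
  have hmain : ∀ n, ∀ x ∈ Set.Icc (0:ℝ) 1, ∀ y ∈ Set.Icc (0:ℝ) 1,
      |iterK K n x y - u y| ≤ (C - δ) * (1 - δ)^n + S n := by
    intro n x hx y hy
    calc |iterK K n x y - u y|
        ≤ |iterK K n x y - iterK K n 0 y| + |iterK K n 0 y - u y| := abs_sub_le _ _ _
      _ ≤ (C - δ) * (1 - δ)^n + S n :=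
          add_le_add (iterK_osc hK hδ hδ1 hpos hrow hC n x hx 0 h0 y hy) (hun n y hy)
  -- continuity
  have hucont : ContinuousOn u (Set.Icc 0 1) := by
    have hTU : TendstoUniformlyOn (fun n y => iterK K n 0 y) u Filter.atTop (Set.Icc 0 1) := by
      rw [Metric.tendstoUniformlyOn_iff]
      intro ε hε
      filter_upwards [hTendS.eventually_lt_const hε] with n hn y hy
      rw [Real.dist_eq, abs_sub_comm]
      exact lt_of_le_of_lt (hun n y hy) hn
    exact hTU.continuousOn (Filter.Eventually.of_forall fun n =>
      (iterK_cont_r hK n 0).continuousOn).frequently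
  have huint : IntervalIntegrable u volume 0 1 := by
    apply ContinuousOn.intervalIntegrable
    rw [uIcc01]; exact hucont
  -- nonnegativity (indeed ≥ δ)
  have huδ : ∀ x ∈ Set.Icc (0:ℝ) 1, δ ≤ u x := fun x hx =>
    ge_of_tendsto (hu x hx) (Filter.Eventually.of_forall fun n =>
      (iterK_bounds hK hδ hpos hrow hC n 0 h0 x hx).1)
  have hupos : ∀ x ∈ Set.Icc (0:ℝ) 1, 0 ≤ u x := fun x hx => le_trans hδ.le (huδ x hx)
  -- integral is 1
  have hu1 : (∫ x in (0:ℝ)..1, u x) = 1 := by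
    have habs : ∀ n, |(∫ x in (0:ℝ)..1, u x) - 1| ≤ S n := by
      intro n
      have hintn : IntervalIntegrable (fun x => iterK K n 0 x) volume 0 1 :=
        (iterK_cont_r hK n 0).intervalIntegrable 0 1
      have e : (∫ x in (0:ℝ)..1, u x) - 1
          = ∫ x in (0:ℝ)..1, (u x - iterK K n 0 x) := by
        rw [intervalIntegral.integral_sub huint hintn, iterK_row hK hrow n 0 h0]
      rw [e, abs_le]
      have hc : ∀ c : ℝ, (∫ _x in (0:ℝ)..1, c) = c := by intro c; simp
      constructor
      · rw [← hc (-S n)]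
        apply intervalIntegral.integral_mono_on zero_le_one intervalIntegrable_const
          (huint.sub hintn)
        intro x hx
        have := abs_le.1 (hun n x hx)
        linarith [this.2]
      · rw [← hc (S n)]
        apply intervalIntegral.integral_mono_on zero_le_one (huint.sub hintn)
          intervalIntegrable_const
        intro x hx
        have := abs_le.1 (hun n x hx)
        linarith [this.1]
    have hle : |(∫ x in (0:ℝ)..1, u x) - 1| ≤ 0 :=
      ge_of_tendsto hTendS (Filter.Eventually.of_forall habs)
    have := abs_nonneg ((∫ x in (0:ℝ)..1, u x) - 1)
    have h2 : |(∫ x in (0:ℝ)..1, u x) - 1| = 0 := le_antisymm hle this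
    have := abs_eq_zero.1 h2
    linarith [sub_eq_zero.1 this]
  -- invariance
  have hinv : ∀ y ∈ Set.Icc (0:ℝ) 1, (∫ x in (0:ℝ)..1, u x * K x y) = u y := by
    intro y hy
    have hKcol : Continuous fun x => K x y := hK.comp (continuous_id.prodMk continuous_const)
    have hintuK : IntervalIntegrable (fun x => u x * K x y) volume 0 1 := by
      apply ContinuousOn.intervalIntegrable
      rw [uIcc01]; exact hucont.mul hKcol.continuousOn
    have habs : ∀ n, |(∫ x in (0:ℝ)..1, u x * K x y) - u y| ≤ S n * C + S (n+1) := by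
      intro n
      have hintn : IntervalIntegrable (fun x => iterK K n 0 x * K x y) volume 0 1 :=
        ((iterK_cont_r hK n 0).mul hKcol).intervalIntegrable 0 1
      have e : (∫ x in (0:ℝ)..1, u x * K x y) - iterK K (n+1) 0 y
          = ∫ x in (0:ℝ)..1, (u x - iterK K n 0 x) * K x y := by
        have : iterK K (n+1) 0 y = ∫ x in (0:ℝ)..1, iterK K n 0 x * K x y := rfl
        rw [this, ← intervalIntegral.integral_sub hintuK hintn]
        congr 1; ext x; ring
      have hpt : ∀ x ∈ Set.Icc (0:ℝ) 1, |(u x - iterK K n 0 x) * K x y| ≤ S n * C := by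
        intro x hx
        rw [abs_mul]
        apply mul_le_mul _ _ (abs_nonneg _) (hS0 n)
        · rw [abs_sub_comm]; exact hun n x hx
        · rw [abs_of_nonneg (le_trans hδ.le (hpos x hx y hy))]
          exact hC x hx y hy
      have hintd : IntervalIntegrable (fun x => (u x - iterK K n 0 x) * K x y) volume 0 1 := by
        apply ContinuousOn.intervalIntegrable
        rw [uIcc01]
        exact (hucont.sub (iterK_cont_r hK n 0).continuousOn).mul hKcol.continuousOn
      have hb1 : |(∫ x in (0:ℝ)..1, u x * K x y) - iterK K (n+1) 0 y| ≤ S n * C := by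
        rw [e, abs_le]
        have hc : ∀ c : ℝ, (∫ _x in (0:ℝ)..1, c) = c := by intro c; simp
        constructor
        · rw [← hc (-(S n * C))]
          apply intervalIntegral.integral_mono_on zero_le_one intervalIntegrable_const hintd
          intro x hx; linarith [(abs_le.1 (hpt x hx)).1]
        · rw [← hc (S n * C)]
          apply intervalIntegral.integral_mono_on zero_le_one hintd intervalIntegrable_const
          intro x hx; linarith [(abs_le.1 (hpt x hx)).2]
      calc |(∫ x in (0:ℝ)..1, u x * K x y) - u y|
          ≤ |(∫ x in (0:ℝ)..1, u x * K x y) - iterK K (n+1) 0 y|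
            + |iterK K (n+1) 0 y - u y| := abs_sub_le _ _ _
        _ ≤ S n * C + S (n+1) := add_le_add hb1 (hun (n+1) y hy)
    have hTend2 : Filter.Tendsto (fun n => S n * C + S (n+1)) Filter.atTop (nhds 0) := by
      have h1 : Filter.Tendsto (fun n => S (n+1)) Filter.atTop (nhds 0) :=
        hTendS.comp (Filter.tendsto_add_atTop_nat 1)
      simpa using (hTendS.mul_const C).add h1
    have hle : |(∫ x in (0:ℝ)..1, u x * K x y) - u y| ≤ 0 :=
      ge_of_tendsto hTend2 (Filter.Eventually.of_forall habs)
    have h2 := le_antisymm hle (abs_nonneg _)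
    linarith [sub_eq_zero.1 (abs_eq_zero.1 h2)]
  refine ⟨u, hucont, hupos, hu1, hinv, ?_⟩
  intro ε hε
  have hTendB : Filter.Tendsto (fun n => (C - δ) * (1 - δ)^n + S n) Filter.atTop (nhds 0) := by
    simpa using (hpow.const_mul (C - δ)).add hTendS
  obtain ⟨N, hN⟩ := Filter.eventually_atTop.1 (hTendB.eventually_le_const hε)
  exact ⟨N, fun n hn x hx y hy => le_trans (hmain n x hx y hy) (hN n hn)⟩
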